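/- Let ι = erf⁻¹ on (0,1) and define E(ρ) = ρ·ι'(ρ)/ι(ρ). Then lim_{ρ→0⁺} E'(ρ) = 0 and lim_{ρ→0⁺} E''(ρ) = π/3. -/

import Mathlib

/-- The Gaussian error function `erf z = (2/√π) ∫₀^z e^{-t²} dt`. -/
noncomputable def erf (z : ℝ) : ℝ :=
  (2 / Real.sqrt Real.pi) * ∫ t in (0:ℝ)..z, Real.exp (-t ^ 2)

/-- The inverse of the Gaussian error function. -/
noncomputable def erfInv : ℝ → ℝ := Function.invFun erf

/-- The elasticity of the inverse error function. -/
noncomputable def E (ρ : ℝ) : ℝ := ρ * deriv erfInv ρ / erfInv ρ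

open Real Set Filter Topology

namespace ErfAux

lemma cont_integrand : Continuous (fun t : ℝ => Real.exp (-t ^ 2)) := by
  continuity

lemma erf_hasDerivAt (x : ℝ) :
    HasDerivAt erf (2 / Real.sqrt Real.pi * Real.exp (-x ^ 2)) x := by
  have h : HasDerivAt (fun u => ∫ t in (0:ℝ)..u, Real.exp (-t ^ 2))
      (Real.exp (-x ^ 2)) x :=
    intervalIntegral.integral_hasDerivAt_right
      (cont_integrand.intervalIntegrable _ _)
      (cont_integrand.stronglyMeasurableAtFilter _ _)
      cont_integrand.continuousAt
  exact (h.const_mul (2 / Real.sqrt Real.pi))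

lemma sqrt_pi_pos : 0 < Real.sqrt Real.pi := Real.sqrt_pos.2 Real.pi_pos

lemma erf_deriv_pos (x : ℝ) : 0 < 2 / Real.sqrt Real.pi * Real.exp (-x ^ 2) :=
  mul_pos (div_pos two_pos sqrt_pi_pos) (Real.exp_pos _)

lemma erf_strictMono : StrictMono erf :=
  strictMono_of_deriv_pos fun x => by
    rw [(erf_hasDerivAt x).deriv]; exact erf_deriv_pos x

lemma erf_zero : erf 0 = 0 := by simp [erf]

lemma erfInv_erf (x : ℝ) : erfInv (erf x) = x :=
  Function.leftInverse_invFun erf_strictMono.injective x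

lemma erfInv_zero : erfInv 0 = 0 := by
  have := erfInv_erf 0; rwa [erf_zero] at this

lemma erf_neg_one_lt : erf (-1) < 0 := by
  rw [← erf_zero]; exact erf_strictMono (by norm_num)

lemma erf_one_pos : 0 < erf 1 := by
  rw [← erf_zero]; exact erf_strictMono (by norm_num)

lemma erf_continuous : Continuous erf :=
  continuous_iff_continuousAt.2 fun x => (erf_hasDerivAt x).continuousAt

lemma exists_erf_eq {y : ℝ} (hy : y ∈ Ioo (erf (-1)) (erf 1)) :
    ∃ x ∈ Ioo (-1:ℝ) 1, erf x = y := by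
  have h := intermediate_value_Ioo (by norm_num : (-1:ℝ) ≤ 1) erf_continuous.continuousOn
  obtain ⟨x, hx, hfx⟩ := h hy
  exact ⟨x, hx, hfx⟩

lemma erf_erfInv {y : ℝ} (hy : y ∈ Ioo (erf (-1)) (erf 1)) : erf (erfInv y) = y := by
  obtain ⟨x, _, rfl⟩ := exists_erf_eq hy
  rw [erfInv_erf]

lemma erfInv_lt_iff {y : ℝ} (hy : y ∈ Ioo (erf (-1)) (erf 1)) {c : ℝ} :
    erfInv y < c ↔ y < erf c := by
  rw [← erf_strictMono.lt_iff_lt, erf_erfInv hy]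

lemma lt_erfInv_iff {y : ℝ} (hy : y ∈ Ioo (erf (-1)) (erf 1)) {c : ℝ} :
    c < erfInv y ↔ erf c < y := by
  rw [← erf_strictMono.lt_iff_lt, erf_erfInv hy]

lemma erfInv_continuousAt {y : ℝ} (hy : y ∈ Ioo (erf (-1)) (erf 1)) :
    ContinuousAt erfInv y := by
  obtain ⟨x₀, hx₀, rfl⟩ := exists_erf_eq hy
  rw [ContinuousAt, erfInv_erf]
  refine tendsto_order.2 ⟨fun c hc => ?_, fun c hc => ?_⟩
  · -- c < x₀ ⇒ eventually c < erfInv y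
    set c' : ℝ := max c (-1) with hc'
    have hc'x : c' < x₀ := max_lt hc hx₀.1
    have hmem : Ioo (erf c') (erf 1) ∈ 𝓝 (erf x₀) :=
      Ioo_mem_nhds (erf_strictMono hc'x) (erf_strictMono hx₀.2)
    filter_upwards [hmem] with y hy'
    have hy'' : y ∈ Ioo (erf (-1)) (erf 1) :=
      ⟨lt_of_le_of_lt (erf_strictMono.monotone (le_max_right c (-1))) hy'.1, hy'.2⟩
    have : c' < erfInv y := (lt_erfInv_iff hy'').2 hy'.1
    exact lt_of_le_of_lt (le_max_left c (-1)) this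
  · set c' : ℝ := min c 1 with hc'
    have hc'x : x₀ < c' := lt_min hc hx₀.2
    have hmem : Ioo (erf (-1)) (erf c') ∈ 𝓝 (erf x₀) :=
      Ioo_mem_nhds (erf_strictMono hx₀.1) (erf_strictMono hc'x)
    filter_upwards [hmem] with y hy'
    have hy'' : y ∈ Ioo (erf (-1)) (erf 1) :=
      ⟨hy'.1, lt_of_lt_of_le hy'.2 (erf_strictMono.monotone (min_le_right c 1))⟩
    have : erfInv y < c' := (erfInv_lt_iff hy'').2 hy'.2
    exact lt_of_lt_of_le this (min_le_left c 1)

/-- The derivative of `erfInv` (valid on `Ioo (erf (-1)) (erf 1)`). -/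
noncomputable def DD (ρ : ℝ) : ℝ := Real.sqrt Real.pi / 2 * Real.exp (erfInv ρ ^ 2)

lemma erfInv_hasDerivAt {y : ℝ} (hy : y ∈ Ioo (erf (-1)) (erf 1)) :
    HasDerivAt erfInv (DD y) y := by
  have h := HasDerivAt.of_local_left_inverse (erfInv_continuousAt hy)
    (erf_hasDerivAt (erfInv y)) (ne_of_gt (erf_deriv_pos _))
    (by
      have : Ioo (erf (-1)) (erf 1) ∈ 𝓝 y := Ioo_mem_nhds hy.1 hy.2
      filter_upwards [this] with z hz
      exact erf_erfInv hz)
  refine h.congr_deriv ?_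
  rw [DD, Real.exp_neg]
  field_simp


lemma DD_pos (ρ : ℝ) : 0 < DD ρ :=
  mul_pos (div_pos sqrt_pi_pos two_pos) (Real.exp_pos _)

lemma zero_mem : (0:ℝ) ∈ Ioo (erf (-1)) (erf 1) := ⟨erf_neg_one_lt, erf_one_pos⟩

lemma Ioo_sub {y : ℝ} (hy : y ∈ Ioo 0 (erf 1)) : y ∈ Ioo (erf (-1)) (erf 1) :=
  ⟨lt_trans erf_neg_one_lt hy.1, hy.2⟩

lemma erfInv_pos {y : ℝ} (hy : y ∈ Ioo 0 (erf 1)) : 0 < erfInv y := by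
  have h := (lt_erfInv_iff (Ioo_sub hy)).2 (by rw [erf_zero]; exact hy.1)
  exact h

lemma E_eq {y : ℝ} (hy : y ∈ Ioo (erf (-1)) (erf 1)) :
    E y = y * DD y / erfInv y := by
  rw [E, (erfInv_hasDerivAt hy).deriv]

lemma DD_hasDerivAt {y : ℝ} (hy : y ∈ Ioo (erf (-1)) (erf 1)) :
    HasDerivAt DD (2 * erfInv y * DD y ^ 2) y := by
  have h1 : HasDerivAt (fun ρ => erfInv ρ ^ 2) (2 * erfInv y ^ 1 * DD y) y :=
    (erfInv_hasDerivAt hy).pow 2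
  have h2 : HasDerivAt (fun ρ => Real.exp (erfInv ρ ^ 2))
      (Real.exp (erfInv y ^ 2) * (2 * erfInv y ^ 1 * DD y)) y := h1.exp
  have h3 := h2.const_mul (Real.sqrt Real.pi / 2)
  refine h3.congr_deriv ?_
  simp only [DD, pow_one]
  ring

/-- First derivative formula for `E` on `Ioo 0 (erf 1)`. -/
noncomputable def F1 (ρ : ℝ) : ℝ :=
  DD ρ / erfInv ρ + 2 * ρ * DD ρ ^ 2 - ρ * DD ρ ^ 2 / erfInv ρ ^ 2

/-- Second derivative formula for `E` on `Ioo 0 (erf 1)`. -/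
noncomputable def F2 (ρ : ℝ) : ℝ :=
  4 * DD ρ ^ 2 + 8 * ρ * erfInv ρ * DD ρ ^ 3 - 4 * ρ * DD ρ ^ 3 / erfInv ρ
    - 2 * DD ρ ^ 2 / erfInv ρ ^ 2 + 2 * ρ * DD ρ ^ 3 / erfInv ρ ^ 3

lemma E_hasDerivAt {y : ℝ} (hy : y ∈ Ioo 0 (erf 1)) :
    HasDerivAt E (F1 y) y := by
  have hy' := Ioo_sub hy
  have hι : erfInv y ≠ 0 := ne_of_gt (erfInv_pos hy)
  have hnum : HasDerivAt (fun ρ => ρ * DD ρ)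
      (1 * DD y + y * (2 * erfInv y * DD y ^ 2)) y :=
    (hasDerivAt_id y).mul (DD_hasDerivAt hy')
  have hF : HasDerivAt (fun ρ => ρ * DD ρ / erfInv ρ)
      (((1 * DD y + y * (2 * erfInv y * DD y ^ 2)) * erfInv y
        - y * DD y * DD y) / erfInv y ^ 2) y :=
    hnum.div (erfInv_hasDerivAt hy') hι
  have heq : (fun ρ => ρ * DD ρ / erfInv ρ) =ᶠ[𝓝 y] E := by
    filter_upwards [Ioo_mem_nhds hy'.1 hy'.2] with z hz
    exact (E_eq hz).symm
  have hE := hF.congr_of_eventuallyEq heq.symm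
  refine hE.congr_deriv ?_
  rw [F1]
  field_simp

lemma deriv_E_eq {y : ℝ} (hy : y ∈ Ioo 0 (erf 1)) : deriv E y = F1 y :=
  (E_hasDerivAt hy).deriv

lemma F1_hasDerivAt {y : ℝ} (hy : y ∈ Ioo 0 (erf 1)) :
    HasDerivAt F1 (F2 y) y := by
  have hy' := Ioo_sub hy
  have hι : erfInv y ≠ 0 := ne_of_gt (erfInv_pos hy)
  have hι2 : erfInv y ^ 2 ≠ 0 := pow_ne_zero _ hι
  have hD := DD_hasDerivAt hy'
  have hI := erfInv_hasDerivAt hy'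
  have h1 : HasDerivAt (fun ρ => DD ρ / erfInv ρ)
      ((2 * erfInv y * DD y ^ 2 * erfInv y - DD y * DD y) / erfInv y ^ 2) y :=
    hD.div hI hι
  have hD2 : HasDerivAt (fun ρ => DD ρ ^ 2) (2 * DD y ^ 1 * (2 * erfInv y * DD y ^ 2)) y :=
    hD.pow 2
  have h2 : HasDerivAt (fun ρ => 2 * ρ * DD ρ ^ 2)
      (2 * (1 * DD y ^ 2 + y * (2 * DD y ^ 1 * (2 * erfInv y * DD y ^ 2)))) y := by
    have h2' := ((hasDerivAt_id y).mul hD2).const_mul 2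
    exact h2'.congr_of_eventuallyEq (Filter.Eventually.of_forall fun ρ => by simp [id]; ring)
  have hI2 : HasDerivAt (fun ρ => erfInv ρ ^ 2) (2 * erfInv y ^ 1 * DD y) y := hI.pow 2
  have h3 : HasDerivAt (fun ρ => ρ * DD ρ ^ 2 / erfInv ρ ^ 2)
      (((1 * DD y ^ 2 + y * (2 * DD y ^ 1 * (2 * erfInv y * DD y ^ 2))) * erfInv y ^ 2
        - y * DD y ^ 2 * (2 * erfInv y ^ 1 * DD y)) / (erfInv y ^ 2) ^ 2) y :=
    ((hasDerivAt_id y).mul hD2).div hI2 hι2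
  have h := (h1.add h2).sub h3
  have hFeq : (fun ρ => DD ρ / erfInv ρ + 2 * ρ * DD ρ ^ 2 - ρ * DD ρ ^ 2 / erfInv ρ ^ 2)
      = F1 := rfl
  have h : HasDerivAt F1 _ y := h
  refine h.congr_deriv ?_
  rw [F2]
  field_simp
  ring

lemma derivE_hasDerivAt {y : ℝ} (hy : y ∈ Ioo 0 (erf 1)) :
    HasDerivAt (deriv E) (F2 y) y := by
  have heq : F1 =ᶠ[𝓝 y] deriv E := by
    filter_upwards [Ioo_mem_nhds hy.1 hy.2] with z hz
    exact (deriv_E_eq hz).symm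
  exact (F1_hasDerivAt hy).congr_of_eventuallyEq heq.symm

lemma deriv2_E_eq {y : ℝ} (hy : y ∈ Ioo 0 (erf 1)) : deriv (deriv E) y = F2 y :=
  (derivE_hasDerivAt hy).deriv


lemma tendsto_rho : Tendsto (fun ρ : ℝ => ρ) (𝓝[>] (0:ℝ)) (𝓝 0) :=
  tendsto_id.mono_right nhdsWithin_le_nhds

lemma tendsto_erfInv : Tendsto erfInv (𝓝[>] (0:ℝ)) (𝓝 0) := by
  have h := (erfInv_continuousAt zero_mem).tendsto
  rw [erfInv_zero] at h
  exact h.mono_left nhdsWithin_le_nhds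

lemma tendsto_DD : Tendsto DD (𝓝[>] (0:ℝ)) (𝓝 (Real.sqrt Real.pi / 2)) := by
  have hc : ContinuousAt DD 0 := by
    have h1 : ContinuousAt (fun ρ => Real.exp (erfInv ρ ^ 2)) 0 :=
      Real.continuous_exp.continuousAt.comp ((erfInv_continuousAt zero_mem).pow 2)
    exact h1.const_mul (Real.sqrt Real.pi / 2)
  have h := hc.tendsto
  have hDD0 : DD 0 = Real.sqrt Real.pi / 2 := by simp [DD, erfInv_zero]
  rw [hDD0] at h
  exact h.mono_left nhdsWithin_le_nhds

lemma tendsto_slope_erfInv :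
    Tendsto (fun ρ => erfInv ρ / ρ) (𝓝[>] (0:ℝ)) (𝓝 (Real.sqrt Real.pi / 2)) := by
  have h := hasDerivAt_iff_tendsto_slope.1 (erfInv_hasDerivAt zero_mem)
  have hDD0 : DD 0 = Real.sqrt Real.pi / 2 := by simp [DD, erfInv_zero]
  rw [hDD0] at h
  have h2 := h.mono_left (nhdsWithin_mono 0 (fun x (hx : x ∈ Ioi 0) => ne_of_gt hx))
  refine h2.congr fun ρ => ?_
  simp [slope_def_field, erfInv_zero]

lemma sqrt_pi_ne : Real.sqrt Real.pi ≠ 0 := ne_of_gt sqrt_pi_pos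

lemma tendsto_ratio :
    Tendsto (fun ρ => ρ / erfInv ρ) (𝓝[>] (0:ℝ)) (𝓝 (2 / Real.sqrt Real.pi)) := by
  have h := tendsto_slope_erfInv.inv₀ (by positivity)
  have : (Real.sqrt Real.pi / 2)⁻¹ = 2 / Real.sqrt Real.pi := by
    rw [inv_div]
  rw [this] at h
  refine h.congr fun ρ => ?_
  rw [inv_div]

lemma tendsto_key :
    Tendsto (fun ρ => (erfInv ρ - ρ * DD ρ) / ρ ^ 3) (𝓝[>] (0:ℝ))
      (𝓝 (-(2/3) * (Real.sqrt Real.pi / 2) * (Real.sqrt Real.pi / 2) ^ 2)) := by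
  refine HasDerivAt.lhopital_zero_right_on_Ioo erf_one_pos
    (f' := fun x => DD x - (1 * DD x + x * (2 * erfInv x * DD x ^ 2)))
    (g' := fun x => 3 * x ^ 2)
    (fun x hx => (erfInv_hasDerivAt (Ioo_sub hx)).sub
      ((hasDerivAt_id x).mul (DD_hasDerivAt (Ioo_sub hx))))
    (fun x hx => by simpa using (hasDerivAt_pow 3 x))
    (fun x hx => by have h1 := hx.1; positivity)
    ?_ ?_ ?_
  · have h := tendsto_erfInv.sub (tendsto_rho.mul tendsto_DD)
    simpa using h
  · have h := tendsto_rho.pow 3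
    simpa using h
  · have h : Tendsto (fun x => -(2/3) * (erfInv x / x) * DD x ^ 2) (𝓝[>] (0:ℝ))
        (𝓝 (-(2/3) * (Real.sqrt Real.pi / 2) * (Real.sqrt Real.pi / 2) ^ 2)) :=
      (tendsto_slope_erfInv.const_mul (-(2/3))).mul (tendsto_DD.pow 2)
    refine h.congr' ?_
    filter_upwards [self_mem_nhdsWithin] with x (hx : (0:ℝ) < x)
    have hx' : x ≠ 0 := ne_of_gt hx
    field_simp
    ring

lemma tendsto_deriv_E : Tendsto (deriv E) (𝓝[>] (0:ℝ)) (𝓝 0) := by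
  have hmem : Ioo (0:ℝ) (erf 1) ∈ 𝓝[>] (0:ℝ) :=
    Ioo_mem_nhdsGT_of_mem ⟨le_refl 0, erf_one_pos⟩
  have hG : Tendsto (fun x => 2 * x * DD x ^ 2
      + x * (DD x * ((erfInv x - x * DD x) / x ^ 3) * (x / erfInv x) ^ 2))
      (𝓝[>] (0:ℝ))
      (𝓝 (2 * 0 * (Real.sqrt Real.pi / 2) ^ 2
        + 0 * (Real.sqrt Real.pi / 2 * (-(2/3) * (Real.sqrt Real.pi / 2)
          * (Real.sqrt Real.pi / 2) ^ 2) * (2 / Real.sqrt Real.pi) ^ 2))) :=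
    ((tendsto_rho.const_mul 2).mul (tendsto_DD.pow 2)).add
      (tendsto_rho.mul ((tendsto_DD.mul tendsto_key).mul (tendsto_ratio.pow 2)))
  have h0 : (2 * (0:ℝ) * (Real.sqrt Real.pi / 2) ^ 2
        + 0 * (Real.sqrt Real.pi / 2 * (-(2/3) * (Real.sqrt Real.pi / 2)
          * (Real.sqrt Real.pi / 2) ^ 2) * (2 / Real.sqrt Real.pi) ^ 2)) = 0 := by ring
  rw [h0] at hG
  refine hG.congr' ?_
  filter_upwards [hmem] with x hx
  have hx0 : x ≠ 0 := ne_of_gt hx.1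
  have hι : erfInv x ≠ 0 := ne_of_gt (erfInv_pos hx)
  rw [deriv_E_eq hx, F1]
  field_simp
  ring

lemma tendsto_deriv2_E :
    Tendsto (deriv (deriv E)) (𝓝[>] (0:ℝ)) (𝓝 (Real.pi / 3)) := by
  have hmem : Ioo (0:ℝ) (erf 1) ∈ 𝓝[>] (0:ℝ) :=
    Ioo_mem_nhdsGT_of_mem ⟨le_refl 0, erf_one_pos⟩
  set s : ℝ := Real.sqrt Real.pi / 2 with hs
  set L : ℝ := -(2/3) * s * s ^ 2 with hL
  have hG : Tendsto (fun x => 4 * DD x ^ 2 + 8 * x * erfInv x * DD x ^ 3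
      - 4 * DD x ^ 3 * (x / erfInv x)
      - 2 * DD x ^ 2 * ((erfInv x - x * DD x) / x ^ 3) * (x / erfInv x) ^ 3)
      (𝓝[>] (0:ℝ))
      (𝓝 (4 * s ^ 2 + 8 * 0 * 0 * s ^ 3 - 4 * s ^ 3 * (2 / Real.sqrt Real.pi)
        - 2 * s ^ 2 * L * (2 / Real.sqrt Real.pi) ^ 3)) :=
    ((((tendsto_DD.pow 2).const_mul 4).add
      (((tendsto_rho.const_mul 8).mul tendsto_erfInv).mul (tendsto_DD.pow 3))).sub
      (((tendsto_DD.pow 3).const_mul 4).mul tendsto_ratio)).sub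
      ((((tendsto_DD.pow 2).const_mul 2).mul tendsto_key).mul (tendsto_ratio.pow 3))
  have hval : (4 * s ^ 2 + 8 * 0 * 0 * s ^ 3 - 4 * s ^ 3 * (2 / Real.sqrt Real.pi)
        - 2 * s ^ 2 * L * (2 / Real.sqrt Real.pi) ^ 3) = Real.pi / 3 := by
    have hπ : Real.sqrt Real.pi ^ 2 = Real.pi := Real.sq_sqrt Real.pi_pos.le
    rw [hL, hs]
    field_simp
    linear_combination 8 * hπ
  rw [hval] at hG
  refine hG.congr' ?_
  filter_upwards [hmem] with x hx
  have hx0 : x ≠ 0 := ne_of_gt hx.1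
  have hι : erfInv x ≠ 0 := ne_of_gt (erfInv_pos hx)
  rw [deriv2_E_eq hx, F2]
  field_simp
  ring

end ErfAux

/--  and . -/
theorem erfInv_elasticity_deriv_limits :
    Filter.Tendsto (deriv E) (nhdsWithin 0 (Set.Ioi 0)) (nhds 0) ∧
    Filter.Tendsto (deriv (deriv E)) (nhdsWithin 0 (Set.Ioi 0)) (nhds (Real.pi / 3)) :=
  ⟨ErfAux.tendsto_deriv_E, ErfAux.tendsto_deriv2_E⟩
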